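/- Let k, a ∈ ℝ, σ > 0, T > 0, let B : [0,T] → ℝ be continuous with B(0) = 0, and let Y : [0,T] → ℝ be continuous and strictly positive with Y(t) = Y(0) + (1/2)∫₀ᵗ (k/Y(s) − a·Y(s)) ds + (σ/2)·B(t) for all t ∈ [0,T]. Set X = Y². Then the pathwise Stratonovich integral of √X against B over [0,T] exists, i.e. there is a real number S such that for every sequence of partitions 0 = t₀ < t₁ < ⋯ < tₙ = T whose mesh tends to zero, the Stratonovich (midpoint) sums Σᵢ ((√X(tᵢ) + √X(tᵢ₋₁))/2)·(B(tᵢ) − B(tᵢ₋₁)) converge to S, and moreover X(T) = X(0) + ∫₀ᵀ (k − a·X(s)) ds + σ·S. -/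

import Mathlib

private lemma mono_aux (t : ℕ → ℝ) (n : ℕ) (h : ∀ i < n, t i < t (i + 1)) :
    ∀ j ≤ n, ∀ i ≤ j, t i ≤ t j := by
  intro j
  induction j with
  | zero => intro _ i hi; interval_cases i; exact le_refl _
  | succ m ih =>
    intro hm i hi
    rcases Nat.lt_succ_iff_lt_or_eq.mp (Nat.lt_succ_of_le hi) with h1 | h1
    · exact le_trans (ih (le_trans (Nat.le_succ m) hm) i (Nat.lt_succ_iff.mp h1))
        (le_of_lt (h m (Nat.lt_of_succ_le hm)))
    · exact h1 ▸ le_refl _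

theorem fCIR_satisfies_Stratonovich_SDE (k a σ T : ℝ) (hσ : 0 < σ) (hT : 0 < T)
    (B Y : ℝ → ℝ) (hBcont : ContinuousOn B (Set.Icc 0 T)) (hB0 : B 0 = 0)
    (hYcont : ContinuousOn Y (Set.Icc 0 T)) (hYpos : ∀ t ∈ Set.Icc (0:ℝ) T, 0 < Y t)
    (hY : ∀ t ∈ Set.Icc (0:ℝ) T,
      Y t = Y 0 + (1 / 2) * (∫ s in (0:ℝ)..t, (k / Y s - a * Y s)) + (σ / 2) * B t) :
    ∃ S : ℝ,
      (∀ ε : ℝ, 0 < ε → ∃ δ : ℝ, 0 < δ ∧ ∀ (n : ℕ) (t : ℕ → ℝ), 0 < n →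
        t 0 = 0 → t n = T → (∀ i < n, t i < t (i + 1)) → (∀ i < n, t (i + 1) - t i < δ) →
        |(∑ i ∈ Finset.range n,
            ((Real.sqrt ((Y (t (i + 1))) ^ 2) + Real.sqrt ((Y (t i)) ^ 2)) / 2) *
              (B (t (i + 1)) - B (t i))) - S| < ε) ∧
      (Y T) ^ 2 = (Y 0) ^ 2 + (∫ s in (0:ℝ)..T, (k - a * (Y s) ^ 2)) + σ * S := by
  set g : ℝ → ℝ := fun s => k / Y s - a * Y s with hg
  set h : ℝ → ℝ := fun s => k - a * (Y s) ^ 2 with hh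
  have hgcont : ContinuousOn g (Set.Icc 0 T) :=
    (continuousOn_const.div hYcont fun u hu => (hYpos u hu).ne').sub
      (continuousOn_const.mul hYcont)
  have hhcont : ContinuousOn h (Set.Icc 0 T) :=
    continuousOn_const.sub (continuousOn_const.mul (hYcont.pow 2))
  have hYg : ∀ s ∈ Set.Icc (0:ℝ) T, Y s * g s = h s := by
    intro s hs
    have := (hYpos s hs).ne'
    simp only [hg, hh]
    field_simp
  have hsub : ∀ u v : ℝ, u ∈ Set.Icc (0:ℝ) T → v ∈ Set.Icc (0:ℝ) T →
      Set.uIcc u v ⊆ Set.Icc 0 T := by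
    intro u v hu hv
    rw [Set.uIcc]
    exact Set.Icc_subset_Icc (le_min hu.1 hv.1) (max_le hu.2 hv.2)
  have hgint : ∀ u v : ℝ, u ∈ Set.Icc (0:ℝ) T → v ∈ Set.Icc (0:ℝ) T →
      IntervalIntegrable g MeasureTheory.volume u v := fun u v hu hv =>
    (hgcont.mono (hsub u v hu hv)).intervalIntegrable
  have hhint : ∀ u v : ℝ, u ∈ Set.Icc (0:ℝ) T → v ∈ Set.Icc (0:ℝ) T →
      IntervalIntegrable h MeasureTheory.volume u v := fun u v hu hv =>
    (hhcont.mono (hsub u v hu hv)).intervalIntegrable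
  obtain ⟨M, hM⟩ := isCompact_Icc.exists_bound_of_continuousOn hgcont
  have hMnn : 0 ≤ M := le_trans (norm_nonneg _) (hM 0 ⟨le_refl _, hT.le⟩)
  set M' : ℝ := M + 1 with hM'def
  have hM' : 0 < M' := by positivity
  have hUC := isCompact_Icc.uniformContinuousOn_of_continuous hYcont
  rw [Metric.uniformContinuousOn_iff] at hUC
  have hB : ∀ u ∈ Set.Icc (0:ℝ) T, B u = (2 * (Y u - Y 0) - ∫ s in (0:ℝ)..u, g s) / σ := by
    intro u hu
    have := hY u hu
    field_simp at this ⊢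
    linarith
  set S : ℝ := ((Y T) ^ 2 - (Y 0) ^ 2 - ∫ s in (0:ℝ)..T, h s) / σ with hSdef
  refine ⟨S, ?_, ?_⟩
  · intro ε hε
    set η : ℝ := ε * σ / (2 * M' * T) with hηdef
    have hη : 0 < η := by positivity
    obtain ⟨δ, hδ, hδY⟩ := hUC η hη
    refine ⟨δ, hδ, ?_⟩
    intro n t hn ht0 htn hmono hmesh
    have hle := mono_aux t n hmono
    have hmem : ∀ i ≤ n, t i ∈ Set.Icc (0:ℝ) T := by
      intro i hi
      constructor
      · rw [← ht0]; exact hle i hi 0 (Nat.zero_le i)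
      · rw [← htn]; exact hle n (le_refl n) i hi
    have hsqrt : ∀ i ≤ n, Real.sqrt ((Y (t i)) ^ 2) = Y (t i) := by
      intro i hi
      rw [Real.sqrt_sq (hYpos _ (hmem i hi)).le]
    set E : ℕ → ℝ := fun i =>
      ∫ s in (t i)..(t (i + 1)), ((Y (t (i + 1)) + Y (t i)) / 2 - Y s) * g s with hEdef
    have hterm : ∀ i < n,
        ((Real.sqrt ((Y (t (i + 1))) ^ 2) + Real.sqrt ((Y (t i)) ^ 2)) / 2) *
            (B (t (i + 1)) - B (t i)) =
          ((Y (t (i + 1))) ^ 2 - (Y (t i)) ^ 2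
            - (∫ s in (t i)..(t (i + 1)), h s) - E i) / σ := by
      intro i hi
      have hi1 : i + 1 ≤ n := hi
      have hmi := hmem i (le_of_lt hi)
      have hmi1 := hmem (i + 1) hi1
      rw [hsqrt i (le_of_lt hi), hsqrt (i + 1) hi1, hB _ hmi, hB _ hmi1]
      have hsplit : (∫ s in (0:ℝ)..(t (i+1)), g s)
          = (∫ s in (0:ℝ)..(t i), g s) + ∫ s in (t i)..(t (i+1)), g s := by
        rw [intervalIntegral.integral_add_adjacent_intervals
          (hgint 0 (t i) ⟨le_refl _, hT.le⟩ hmi) (hgint _ _ hmi hmi1)]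
      have hYgint : IntervalIntegrable (fun s => Y s * g s) MeasureTheory.volume
          (t i) (t (i+1)) :=
        ((hYcont.mono (hsub _ _ hmi hmi1)).mul
          (hgcont.mono (hsub _ _ hmi hmi1))).intervalIntegrable
      have hEeq : E i = ((Y (t (i + 1)) + Y (t i)) / 2) * (∫ s in (t i)..(t (i+1)), g s)
          - ∫ s in (t i)..(t (i+1)), h s := by
        have e1 : (∫ s in (t i)..(t (i+1)), Y s * g s)
            = ∫ s in (t i)..(t (i+1)), h s :=
          intervalIntegral.integral_congr fun s hs => hYg s (hsub _ _ hmi hmi1 hs)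
        rw [← e1, ← intervalIntegral.integral_const_mul,
          ← intervalIntegral.integral_sub ((hgint _ _ hmi hmi1).const_mul _) hYgint]
        show (∫ s in (t i)..(t (i+1)), ((Y (t (i + 1)) + Y (t i)) / 2 - Y s) * g s) = _
        exact intervalIntegral.integral_congr fun s _ => by ring
      rw [hsplit, hEeq]
      field_simp
      ring
    rw [Finset.sum_congr rfl fun i hi => hterm i (Finset.mem_range.mp hi)]
    have hKsum : ∑ i ∈ Finset.range n, (∫ s in (t i)..(t (i+1)), h s)
        = ∫ s in (0:ℝ)..T, h s := by
      rw [intervalIntegral.sum_integral_adjacent_intervals fun i hi =>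
        hhint _ _ (hmem i (le_of_lt hi)) (hmem (i+1) hi)]
      rw [ht0, htn]
    have hsq : ∑ i ∈ Finset.range n, ((Y (t (i+1)))^2 - (Y (t i))^2)
        = (Y T)^2 - (Y 0)^2 := by
      rw [Finset.sum_range_sub (fun i => (Y (t i))^2), ht0, htn]
    have hmain : (∑ i ∈ Finset.range n,
        ((Y (t (i + 1))) ^ 2 - (Y (t i)) ^ 2
          - (∫ s in (t i)..(t (i + 1)), h s) - E i) / σ) - S
        = -(∑ i ∈ Finset.range n, E i) / σ := by
      rw [← Finset.sum_div, hSdef]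
      rw [div_sub_div_same, neg_div]
      congr 1
      simp only [Finset.sum_sub_distrib, hKsum, hsq]
      ring
    rw [hmain]
    have hEbound : ∀ i < n, |E i| ≤ η * M' * (t (i+1) - t i) := by
      intro i hi
      have hmi := hmem i (le_of_lt hi)
      have hmi1 := hmem (i + 1) (hi : i + 1 ≤ n)
      have hlt := hmono i hi
      have hC : ∀ s ∈ Set.uIoc (t i) (t (i+1)),
          ‖((Y (t (i + 1)) + Y (t i)) / 2 - Y s) * g s‖ ≤ η * M' := by
        intro s hs
        rw [Set.uIoc_of_le hlt.le] at hs
        have hsIcc : s ∈ Set.Icc (0:ℝ) T :=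
          hsub _ _ hmi hmi1 (by rw [Set.uIcc_of_le hlt.le]; exact Set.Ioc_subset_Icc_self hs)
        have hd1 : |Y (t i) - Y s| ≤ η := by
          have hdist : dist (t i) s < δ := by
            rw [Real.dist_eq, abs_of_nonpos (by linarith [hs.1])]
            linarith [hmesh i hi, hs.2]
          have := hδY (t i) hmi s hsIcc hdist
          rw [Real.dist_eq] at this
          exact this.le
        have hd2 : |Y (t (i+1)) - Y s| ≤ η := by
          have hdist : dist (t (i+1)) s < δ := by
            rw [Real.dist_eq, abs_of_nonneg (by linarith [hs.2])]
            linarith [hmesh i hi, hs.1]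
          have := hδY (t (i+1)) hmi1 s hsIcc hdist
          rw [Real.dist_eq] at this
          exact this.le
        rw [norm_mul]
        have h1 : ‖(Y (t (i + 1)) + Y (t i)) / 2 - Y s‖ ≤ η := by
          rw [Real.norm_eq_abs,
            show (Y (t (i + 1)) + Y (t i)) / 2 - Y s
              = ((Y (t (i+1)) - Y s) + (Y (t i) - Y s)) / 2 by ring,
            abs_div, abs_two]
          have := abs_add_le (Y (t (i+1)) - Y s) (Y (t i) - Y s)
          linarith
        have h2 : ‖g s‖ ≤ M' := le_trans (hM s hsIcc) (by simp [hM'def])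
        exact mul_le_mul h1 h2 (norm_nonneg _) hη.le
      have hb := intervalIntegral.norm_integral_le_of_norm_le_const hC
      rw [Real.norm_eq_abs, abs_of_pos (sub_pos.mpr hlt)] at hb
      simpa [hEdef, Real.norm_eq_abs] using hb
    have hΔsum : ∑ i ∈ Finset.range n, (t (i+1) - t i) = T := by
      rw [Finset.sum_range_sub t, ht0, htn]; ring
    have hsumE : |∑ i ∈ Finset.range n, E i| ≤ η * M' * T := by
      calc |∑ i ∈ Finset.range n, E i| ≤ ∑ i ∈ Finset.range n, |E i| :=
          Finset.abs_sum_le_sum_abs _ _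
        _ ≤ ∑ i ∈ Finset.range n, η * M' * (t (i+1) - t i) :=
          Finset.sum_le_sum fun i hi => hEbound i (Finset.mem_range.mp hi)
        _ = η * M' * T := by rw [← Finset.mul_sum, hΔsum]
    have habs : |(-(∑ i ∈ Finset.range n, E i)) / σ| ≤ η * M' * T / σ := by
      rw [abs_div, abs_neg, abs_of_pos hσ]
      gcongr
    have hfin : η * M' * T / σ = ε / 2 := by
      rw [hηdef]; field_simp
    calc |(-∑ i ∈ Finset.range n, E i) / σ| ≤ η * M' * T / σ := habs
      _ = ε / 2 := hfin
      _ < ε := by linarith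
  · rw [hSdef]
    field_simp
    ring
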